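/- For all integers m and p with m ≥ 2 and 2 ≤ p ≤ m, one has (p·(m²-3m+4) - (m²-m+2))/(2m-2) - (p²/2 - 3p/2 + 1) ≥ 0 (as rational numbers; note 2m-2 > 0 and m²-3m+4 > 0 for m ≥ 2). -/

import Mathlib

/-- Inequality (5) in the proof of Corollary 3.3. -/
theorem stmt_11 (m p : ℤ) (hm : 2 ≤ m) (hp : 2 ≤ p) (hpm : p ≤ m) :
    ((p : ℚ) * ((m : ℚ) ^ 2 - 3 * (m : ℚ) + 4) - ((m : ℚ) ^ 2 - (m : ℚ) + 2)) /
        (2 * (m : ℚ) - 2) -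
      ((p : ℚ) ^ 2 / 2 - 3 * (p : ℚ) / 2 + 1) ≥ 0 := by
  have hm' : (2:ℚ) ≤ (m:ℚ) := by exact_mod_cast hm
  have hp' : (2:ℚ) ≤ (p:ℚ) := by exact_mod_cast hp
  have hpm' : (p:ℚ) ≤ (m:ℚ) := by exact_mod_cast hpm
  have hd : (0:ℚ) < 2 * (m:ℚ) - 2 := by linarith
  have key : ((p : ℚ) * ((m : ℚ) ^ 2 - 3 * (m : ℚ) + 4) - ((m : ℚ) ^ 2 - (m : ℚ) + 2)) /
        (2 * (m : ℚ) - 2) -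
      ((p : ℚ) ^ 2 / 2 - 3 * (p : ℚ) / 2 + 1)
      = (((m:ℚ) - p) * (((m:ℚ) - 1) * p - ((m:ℚ) + 1))) / (2 * (m:ℚ) - 2) := by
    have hd' : (2 * (m:ℚ) - 2) ≠ 0 := hd.ne'
    rw [eq_div_iff hd', sub_mul, div_mul_cancel₀ _ hd']
    ring
  rw [key]
  apply div_nonneg _ (le_of_lt hd)
  rcases eq_or_lt_of_le hpm with h | h
  · subst h; ring_nf; nlinarith
  · have h1 : p + 1 ≤ m := h
    have h1' : (p:ℚ) + 1 ≤ (m:ℚ) := by exact_mod_cast h1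
    have hm3 : (3:ℚ) ≤ (m:ℚ) := by linarith
    nlinarith [mul_nonneg (sub_nonneg.2 hpm') (sub_nonneg.2 hp')]
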